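/- Let V be a finite-dimensional real inner product space and let Δ ⊆ V be a nonempty closed convex set. Then the closure in V × ℝ of the set {t•(v, 1) | t > 0, v ∈ Δ} equals the disjoint union {t•(v, 1) | t > 0, v ∈ Δ} ∪ (tail(Δ) × {0}), where tail(Δ) := {x ∈ V | w + t•x ∈ Δ for all w ∈ Δ and all t ≥ 0} is the recession cone of Δ. In particular, Δ is recovered as the intersection of this closed cone with V × {1}. -/

import Mathlib

open RealInnerProductSpace

/-- The open cone over `Δ` at height `1` in `V × ℝ`: `{t • (v, 1) | t > 0, v ∈ Δ}`. -/
def posConeOver {V : Type*} [AddCommGroup V] [Module ℝ V] (Δ : Set V) :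
    Set (V × ℝ) :=
  {p : V × ℝ | ∃ t : ℝ, 0 < t ∧ ∃ v ∈ Δ, p = t • ((v, 1) : V × ℝ)}

/-- The tail (recession) cone of a set `S ⊆ V`. -/
def tailCone {V : Type*} [AddCommGroup V] [Module ℝ V] (S : Set V) : Set V :=
  {x : V | ∀ w ∈ S, ∀ t : ℝ, 0 ≤ t → w + t • x ∈ S}

section Aux
variable {V : Type*} [NormedAddCommGroup V] [NormedSpace ℝ V]

lemma subset_aux (Δ : Set V) (hcl : IsClosed Δ) (hconv : Convex ℝ Δ) :
    closure (posConeOver Δ) ⊆ posConeOver Δ ∪ (tailCone Δ) ×ˢ {(0 : ℝ)} := by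
  intro p hp
  rw [mem_closure_iff_seq_limit] at hp
  obtain ⟨f, hf, hlim⟩ := hp
  choose t ht v hv hfeq using hf
  have hf1 : ∀ n, (f n).1 = t n • v n := by
    intro n; rw [hfeq n]; simp
  have hf2 : ∀ n, (f n).2 = t n := by
    intro n; rw [hfeq n]; simp
  have hlim1 : Filter.Tendsto (fun n => t n • v n) Filter.atTop (nhds p.1) :=
    Filter.Tendsto.congr hf1 ((continuous_fst.tendsto p).comp hlim)
  have hlim2 : Filter.Tendsto t Filter.atTop (nhds p.2) :=
    Filter.Tendsto.congr hf2 ((continuous_snd.tendsto p).comp hlim)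
  have h2 : 0 ≤ p.2 := le_of_tendsto_of_tendsto tendsto_const_nhds hlim2
    (Filter.Eventually.of_forall fun n => (ht n).le)
  rcases eq_or_lt_of_le h2 with h0 | hpos
  · -- p.2 = 0, show p ∈ tailCone Δ ×ˢ {0}
    right
    refine Set.mem_prod.2 ⟨?_, by simpa using h0.symm⟩
    intro w hw s hs
    have ht0 : Filter.Tendsto t Filter.atTop (nhds 0) := by rwa [h0]
    have hst : Filter.Tendsto (fun n => s * t n) Filter.atTop (nhds 0) := by
      simpa using ht0.const_mul s
    have hev : ∀ᶠ n in Filter.atTop, s * t n ≤ 1 :=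
      (hst.eventually (eventually_le_nhds (by norm_num : (0:ℝ) < 1)))
    have hmem : ∀ᶠ n in Filter.atTop,
        (1 - s * t n) • w + s • (t n • v n) ∈ Δ := by
      filter_upwards [hev] with n hn
      have := hconv hw (hv n) (by linarith : (0:ℝ) ≤ 1 - s * t n)
        (mul_nonneg hs (ht n).le) (by ring)
      simpa [smul_smul] using this
    have hglim : Filter.Tendsto (fun n => (1 - s * t n) • w + s • (t n • v n))
        Filter.atTop (nhds (w + s • p.1)) := by
      have hc1 : Filter.Tendsto (fun _ : ℕ => (1:ℝ)) Filter.atTop (nhds 1) :=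
        tendsto_const_nhds
      have hcw : Filter.Tendsto (fun _ : ℕ => w) Filter.atTop (nhds w) :=
        tendsto_const_nhds
      have h1 := ((hc1.sub hst).smul hcw).add (hlim1.const_smul s)
      simpa using h1
    exact hcl.mem_of_tendsto hglim hmem
  · -- p.2 > 0
    left
    have hne2 : p.2 ≠ 0 := ne_of_gt hpos
    have hvlim : Filter.Tendsto v Filter.atTop (nhds (p.2⁻¹ • p.1)) := by
      have hinv : Filter.Tendsto (fun n => (t n)⁻¹) Filter.atTop (nhds p.2⁻¹) :=
        hlim2.inv₀ hne2
      have := hinv.smul hlim1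
      refine this.congr fun n => ?_
      rw [smul_smul, inv_mul_cancel₀ (ne_of_gt (ht n)), one_smul]
    refine ⟨p.2, hpos, p.2⁻¹ • p.1, hcl.mem_of_tendsto hvlim
      (Filter.Eventually.of_forall hv), ?_⟩
    ext
    · simp [smul_inv_smul₀ hne2]
    · simp

end Aux

section Aux2
variable {V : Type*} [NormedAddCommGroup V] [NormedSpace ℝ V]

lemma tail_subset_closure_aux (Δ : Set V) (hne : Δ.Nonempty) :
    (tailCone Δ) ×ˢ {(0 : ℝ)} ⊆ closure (posConeOver Δ) := by
  rintro ⟨x, r⟩ hp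
  obtain ⟨hx, hr⟩ := Set.mem_prod.1 hp
  simp only [Set.mem_singleton_iff] at hr
  subst hr
  obtain ⟨w, hw⟩ := hne
  rw [mem_closure_iff_seq_limit]
  refine ⟨fun n => ((n : ℝ) + 1)⁻¹ • ((w + ((n : ℝ) + 1) • x, 1) : V × ℝ), ?_, ?_⟩
  · intro n
    have hnpos : (0 : ℝ) < (n : ℝ) + 1 := by positivity
    exact ⟨((n : ℝ) + 1)⁻¹, by positivity, w + ((n : ℝ) + 1) • x,
      hx w hw _ hnpos.le, rfl⟩
  · have hinv : Filter.Tendsto (fun n : ℕ => ((n : ℝ) + 1)⁻¹) Filter.atTop (nhds 0) :=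
      tendsto_one_div_add_atTop_nhds_zero_nat.congr (fun n => by rw [one_div])
    have h1 : Filter.Tendsto (fun n : ℕ => ((n : ℝ) + 1)⁻¹ • (w + ((n : ℝ) + 1) • x))
        Filter.atTop (nhds x) := by
      have hcw : Filter.Tendsto (fun _ : ℕ => w) Filter.atTop (nhds w) :=
        tendsto_const_nhds
      have := (hinv.smul hcw).add
        (tendsto_const_nhds : Filter.Tendsto (fun _ : ℕ => x) Filter.atTop (nhds x))
      refine Filter.Tendsto.congr (fun n => ?_) (by simpa using this)
      have hne' : ((n : ℝ) + 1) ≠ 0 := by positivity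
      rw [smul_add, smul_smul, inv_mul_cancel₀ hne', one_smul]
    have h2 : Filter.Tendsto (fun n : ℕ => ((n : ℝ) + 1)⁻¹ * 1) Filter.atTop (nhds 0) := by
      simpa using hinv
    exact (h1.prodMk_nhds h2).congr (fun n => rfl)

end Aux2


/-- **(4.1 dualPol).** For a nonempty closed convex set `Δ ⊆ V`, the closed cone
`C(Δ) = closure(ℝ_{>0} • (Δ × {1}))` decomposes as the disjoint union of
`ℝ_{>0} • (Δ × {1})` and `tail(Δ) × {0}`; in particular `Δ` is recovered as the
cross-section of `C(Δ)` at height `1`. -/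
theorem closure_posConeOver_eq_union_tail
    {V : Type*} [NormedAddCommGroup V] [InnerProductSpace ℝ V]
    [FiniteDimensional ℝ V]
    (Δ : Set V) (hne : Δ.Nonempty) (hcl : IsClosed Δ) (hconv : Convex ℝ Δ) :
    closure (posConeOver Δ) = posConeOver Δ ∪ (tailCone Δ) ×ˢ {(0 : ℝ)} ∧
      Disjoint (posConeOver Δ) ((tailCone Δ) ×ˢ {(0 : ℝ)}) ∧
      closure (posConeOver Δ) ∩ (Set.univ ×ˢ {(1 : ℝ)}) = Δ ×ˢ {(1 : ℝ)} := by
  have hmain : closure (posConeOver Δ) = posConeOver Δ ∪ (tailCone Δ) ×ˢ {(0 : ℝ)} := by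
    refine Set.Subset.antisymm (subset_aux Δ hcl hconv) (Set.union_subset subset_closure
      (tail_subset_closure_aux Δ hne))
  refine ⟨hmain, ?_, ?_⟩
  · rw [Set.disjoint_left]
    rintro p ⟨t, ht, v, hv, rfl⟩ hmem
    obtain ⟨-, h2⟩ := Set.mem_prod.1 hmem
    simp only [Set.mem_singleton_iff, Prod.smul_mk, smul_eq_mul, mul_one] at h2
    exact absurd h2 (ne_of_gt ht)
  · rw [hmain]
    ext p
    constructor
    · rintro ⟨hp | hp, -, h1⟩
      · obtain ⟨t, ht, v, hv, rfl⟩ := hp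
        simp only [Set.mem_singleton_iff, Prod.smul_mk, smul_eq_mul, mul_one] at h1
        subst h1
        simpa using hv
      · obtain ⟨-, h0⟩ := Set.mem_prod.1 hp
        simp only [Set.mem_singleton_iff] at h0
        rw [Set.mem_singleton_iff] at h1
        rw [h0] at h1
        norm_num at h1
    · rintro ⟨h1, h2⟩
      rw [Set.mem_singleton_iff] at h2
      refine ⟨Or.inl ⟨1, one_pos, p.1, h1, ?_⟩, Set.mem_univ _, h2⟩
      ext <;> simp [h2]
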